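/- Let X, Y be Banach spaces, G ⊂ X, f : X → Y, L, δ > 0 with ‖f(x)−f(y)‖ ≤ L‖x−y‖ whenever y ∈ G, ‖x−y‖ < δ. Let x ∈ G be a point where d_G is Gâteaux differentiable, let 0 ≠ v ∈ X, and suppose the directional derivative f'(x,v) exists. Then f'(x,v) lies in the closed linear span of f(G ∩ B(x, δ/2)). -/

import Mathlib

open Metric Topology Filter

theorem dirDeriv_mem_closed_span
    {X Y : Type*} [NormedAddCommGroup X] [NormedSpace ℝ X] [CompleteSpace X]
    [NormedAddCommGroup Y] [NormedSpace ℝ Y] [CompleteSpace Y]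
    (G : Set X) (f : X → Y) (L δ : ℝ) (hL : 0 < L) (hδ : 0 < δ)
    (hf : ∀ y ∈ G, ∀ x : X, ‖x - y‖ < δ → ‖f x - f y‖ ≤ L * ‖x - y‖)
    (x : X) (hx : x ∈ G)
    (hd : ∃ T : X →L[ℝ] ℝ, ∀ u : X,
      Tendsto (fun t : ℝ => t⁻¹ * (Metric.infDist (x + t • u) G - Metric.infDist x G))
        (𝓝[≠] 0) (𝓝 (T u)))
    (v : X) (hv : v ≠ 0) (y : Y)
    (hderiv : Tendsto (fun t : ℝ => t⁻¹ • (f (x + t • v) - f x)) (𝓝[≠] 0) (𝓝 y)) :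
    y ∈ closure (Submodule.span ℝ (f '' (G ∩ Metric.ball x (δ / 2))) : Set Y) := by
  obtain ⟨T, hT⟩ := hd
  have hdist0 : Metric.infDist x G = 0 := Metric.infDist_zero_of_mem hx
  have hq : Tendsto (fun t : ℝ => t⁻¹ * Metric.infDist (x + t • v) G)
      (𝓝[≠] (0:ℝ)) (𝓝 (T v)) := by
    simpa [hdist0] using hT v
  have hpos : Tendsto (fun t : ℝ => t⁻¹ * Metric.infDist (x + t • v) G)
      (𝓝[>] (0:ℝ)) (𝓝 (T v)) :=
    hq.mono_left (nhdsWithin_mono 0 fun t ht => ne_of_gt ht)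
  have hneg : Tendsto (fun t : ℝ => t⁻¹ * Metric.infDist (x + t • v) G)
      (𝓝[<] (0:ℝ)) (𝓝 (T v)) :=
    hq.mono_left (nhdsWithin_mono 0 fun t ht => ne_of_lt ht)
  have h1 : 0 ≤ T v :=
    ge_of_tendsto hpos (eventually_mem_nhdsWithin.mono fun t ht =>
      mul_nonneg (inv_nonneg.2 (le_of_lt ht)) Metric.infDist_nonneg)
  have h2 : T v ≤ 0 :=
    le_of_tendsto hneg (eventually_mem_nhdsWithin.mono fun t ht =>
      mul_nonpos_iff.2 (Or.inr ⟨inv_nonpos.2 (le_of_lt ht), Metric.infDist_nonneg⟩))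
  have hTv : T v = 0 := le_antisymm h2 h1
  rw [hTv] at hq
  have habs : Tendsto (fun t : ℝ => |t|⁻¹ * Metric.infDist (x + t • v) G)
      (𝓝[≠] (0:ℝ)) (𝓝 0) := by
    have := hq.abs
    simpa [abs_mul, abs_inv, abs_of_nonneg Metric.infDist_nonneg] using this
  rw [Metric.mem_closure_iff]
  intro ε hε
  set C : ℝ := ε / (2 * L) + ‖v‖ with hC
  have hCpos : 0 < C := by positivity
  have e1 : ∀ᶠ t in 𝓝[≠] (0:ℝ),
      dist (t⁻¹ • (f (x + t • v) - f x)) y < ε / 2 :=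
    Metric.tendsto_nhds.1 hderiv (ε / 2) (by positivity)
  have e2 : ∀ᶠ t in 𝓝[≠] (0:ℝ),
      |t|⁻¹ * Metric.infDist (x + t • v) G < ε / (4 * L) := by
    exact habs.eventually_lt_const (show (0:ℝ) < ε / (4 * L) by positivity)
  have e3 : ∀ᶠ t in 𝓝[≠] (0:ℝ), |t| < δ / (2 * C) := by
    have habs0 : Tendsto (fun t : ℝ => |t|) (𝓝 0) (𝓝 0) := by
      simpa using (continuous_abs.tendsto (0:ℝ))
    have h0 : ∀ᶠ t in 𝓝 (0:ℝ), |t| < δ / (2 * C) :=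
      habs0.eventually_lt_const (show (0:ℝ) < δ / (2 * C) by positivity)
    exact h0.filter_mono nhdsWithin_le_nhds
  have e4 : ∀ᶠ t in 𝓝[≠] (0:ℝ), t ≠ 0 := eventually_mem_nhdsWithin
  obtain ⟨t, h1t, h2t, h3t, h4t⟩ := (e1.and (e2.and (e3.and e4))).exists
  have htpos : 0 < |t| := abs_pos.2 h4t
  have hd4 : Metric.infDist (x + t • v) G < ε / (4 * L) * |t| := by
    have heq : Metric.infDist (x + t • v) G
        = |t| * (|t|⁻¹ * Metric.infDist (x + t • v) G) := by
      field_simp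
    rw [heq]
    calc |t| * (|t|⁻¹ * Metric.infDist (x + t • v) G)
        < |t| * (ε / (4 * L)) := by exact mul_lt_mul_of_pos_left h2t htpos
      _ = ε / (4 * L) * |t| := by ring
  have hd2 : Metric.infDist (x + t • v) G < ε * |t| / (2 * L) := by
    have : ε / (4 * L) * |t| < ε * |t| / (2 * L) := by
      rw [div_mul_eq_mul_div, div_lt_div_iff₀ (by positivity) (by positivity)]
      nlinarith [mul_pos (mul_pos hε htpos) hL]
    linarith
  obtain ⟨w, hwG, hw⟩ := (Metric.infDist_lt_iff ⟨x, hx⟩).1 hd2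
  have hwb : ε * |t| / (2 * L) ≤ C * |t| := by
    rw [hC]
    have : ε * |t| / (2 * L) = ε / (2 * L) * |t| := by ring
    rw [this]
    nlinarith [norm_nonneg v, htpos]
  have hCt : C * |t| < δ / 2 := by
    calc C * |t| < C * (δ / (2 * C)) := mul_lt_mul_of_pos_left h3t hCpos
      _ = δ / 2 := by field_simp
  have hnw : ‖(x + t • v) - w‖ < δ := by
    rw [← dist_eq_norm]
    linarith
  have hwball : w ∈ Metric.ball x (δ / 2) := by
    rw [Metric.mem_ball]
    have hxd : dist (x + t • v) x = |t| * ‖v‖ := by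
      rw [dist_eq_norm, add_sub_cancel_left, norm_smul, Real.norm_eq_abs]
    calc dist w x ≤ dist w (x + t • v) + dist (x + t • v) x := dist_triangle _ _ _
      _ = dist (x + t • v) w + |t| * ‖v‖ := by rw [dist_comm, hxd]
      _ < ε * |t| / (2 * L) + |t| * ‖v‖ := by linarith
      _ ≤ C * |t| := le_of_eq (by rw [hC]; ring)
      _ < δ / 2 := hCt
  have hfw : ‖f (x + t • v) - f w‖ ≤ L * ‖(x + t • v) - w‖ := hf w hwG _ hnw
  have hfxmem : f x ∈ f '' (G ∩ Metric.ball x (δ / 2)) :=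
    ⟨x, ⟨hx, Metric.mem_ball_self (by positivity)⟩, rfl⟩
  have hfwmem : f w ∈ f '' (G ∩ Metric.ball x (δ / 2)) := ⟨w, ⟨hwG, hwball⟩, rfl⟩
  refine ⟨t⁻¹ • (f w - f x), ?_, ?_⟩
  · exact Submodule.smul_mem _ _ (sub_mem (Submodule.subset_span hfwmem)
      (Submodule.subset_span hfxmem))
  · have hqz : dist (t⁻¹ • (f (x + t • v) - f x)) (t⁻¹ • (f w - f x))
        = |t|⁻¹ * ‖f (x + t • v) - f w‖ := by
      rw [dist_eq_norm, ← smul_sub, sub_sub_sub_cancel_right, norm_smul,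
        Real.norm_eq_abs, abs_inv]
    have hbound : |t|⁻¹ * ‖f (x + t • v) - f w‖ < ε / 2 := by
      have h1' : ‖f (x + t • v) - f w‖ ≤ L * ‖(x + t • v) - w‖ := hfw
      have h2' : L * ‖(x + t • v) - w‖ < L * (ε * |t| / (2 * L)) := by
        apply mul_lt_mul_of_pos_left _ hL
        rw [← dist_eq_norm]; exact hw
      have h3' : L * (ε * |t| / (2 * L)) = ε * |t| / 2 := by field_simp
      have : ‖f (x + t • v) - f w‖ < ε * |t| / 2 := by linarith
      calc |t|⁻¹ * ‖f (x + t • v) - f w‖ < |t|⁻¹ * (ε * |t| / 2) :=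
            mul_lt_mul_of_pos_left this (by positivity)
        _ = ε / 2 := by field_simp
    calc dist y (t⁻¹ • (f w - f x))
        ≤ dist y (t⁻¹ • (f (x + t • v) - f x))
          + dist (t⁻¹ • (f (x + t • v) - f x)) (t⁻¹ • (f w - f x)) := dist_triangle _ _ _
      _ < ε / 2 + ε / 2 := by
          rw [hqz]
          have := h1t
          rw [dist_comm] at this
          exact add_lt_add this hbound
      _ = ε := by ring
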